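/- There exists a marriage problem with three men and three women such that the man-proposing deferred acceptance mechanism DA^M violates the Fixed compromiser condition; consequently, for this problem DA^M is not a local priority mechanism. -/
import Mathlib


/- Common framework: constrained allocation, local priority mechanisms
   (Root & Ahn, "Local Priority Mechanisms"). Agents `N`, objects `O`.
   A strict preference is encoded as a `LinearOrder` on `O`, where
   `pi.lt b a` means `a` is strictly preferred to `b`. -/

open Classical

noncomputable section

variable {N O : Type}

/-- `a` is strictly preferred to `b` under `pi`. -/
def sPref (pi : LinearOrder O) (a b : O) : Prop := pi.lt b a

/-- `a` is weakly preferred to `b` under `pi`. -/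
def wPref (pi : LinearOrder O) (a b : O) : Prop := a = b ∨ pi.lt b a

/-- The favourite (top-ranked) object under `pi`. -/
def topObj [Fintype O] [Nonempty O] (pi : LinearOrder O) : O :=
  @Finset.max' O pi Finset.univ Finset.univ_nonempty

/-- `tau1 p` is the allocation assigning each agent her favourite object. -/
def tau1 [Fintype O] [Nonempty O] (p : N → LinearOrder O) : N → O :=
  fun i => topObj (p i)

/-- The strict lower contour set of `a` under `pi`, as a finset. -/
def LCfin [Fintype O] (pi : LinearOrder O) (a : O) : Finset O :=
  Finset.univ.filter fun b => pi.lt b a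

/-- The best element of the strict lower contour set of `a` (junk value `a` if empty). -/
def bestLC [Fintype O] (pi : LinearOrder O) (a : O) : O :=
  if h : (LCfin pi a).Nonempty then @Finset.max' O pi _ h else a

/-- At `x`, no local compromiser has an empty strict lower contour set. -/
def lpNoFail [Fintype O] (α : (N → O) → Set N) (p : N → LinearOrder O) (x : N → O) : Prop :=
  ∀ i ∈ α x, (LCfin (p i) (x i)).Nonempty

/-- One step of the local priority algorithm: all local compromisers move to their
next-favourite object, everyone else stays put. -/
def lpStep [Fintype O] (α : (N → O) → Set N) (p : N → LinearOrder O) (x : N → O) : N → O :=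
  fun k => if k ∈ α x then bestLC (p k) (x k) else x k

/-- The local priority algorithm for `α` at profile `p` terminates (without failure)
returning the feasible allocation `y`. -/
def lpRunsTo [Fintype O] [Nonempty O] (C : Set (N → O)) (α : (N → O) → Set N)
    (p : N → LinearOrder O) (y : N → O) : Prop :=
  ∃ (m : ℕ) (x : ℕ → N → O),
    x 0 = tau1 p ∧
    (∀ t < m, x t ∉ C ∧ lpNoFail α p (x t) ∧ x (t + 1) = lpStep α p (x t)) ∧
    x m = y ∧ y ∈ C

/-- `α` is a local compromiser assignment for the constraint `C`. -/
def IsLCA (C : Set (N → O)) (α : (N → O) → Set N) : Prop :=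
  ∀ x, (x ∉ C → (α x).Nonempty) ∧ (x ∈ C → α x = ∅)

/-- `α` is implementable: the local priority algorithm returns a feasible
allocation (never the failure symbol) on every profile. -/
def lpImplementable [Fintype O] [Nonempty O] (C : Set (N → O)) (α : (N → O) → Set N) : Prop :=
  ∀ p : N → LinearOrder O, ∃ y, lpRunsTo C α p y

/-- `α` is an implementable local compromiser assignment for `C` inducing the mechanism `f`,
i.e. `f = LP_α`. -/
def lpInduces [Fintype O] [Nonempty O] (C : Set (N → O)) (α : (N → O) → Set N)
    (f : (N → LinearOrder O) → N → O) : Prop :=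
  IsLCA C α ∧ ∀ p, lpRunsTo C α p (f p)

/-- The local priority mechanism `LP_α` (well defined whenever `α` is implementable,
since the algorithm is deterministic). -/
def LPmech [Fintype O] [Nonempty O] (C : Set (N → O)) (α : (N → O) → Set N)
    (p : N → LinearOrder O) : N → O :=
  if h : ∃ y, lpRunsTo C α p y then h.choose else fun _ => Classical.arbitrary O

/-- Group strategy-proofness. -/
def GSP (f : (N → LinearOrder O) → N → O) : Prop :=
  ∀ (p p' : N → LinearOrder O) (M : Set N), M.Nonempty → (∀ j ∉ M, p' j = p j) →
    ¬ ((∀ j ∈ M, wPref (p j) (f p' j) (f p j)) ∧ ∃ k ∈ M, sPref (p k) (f p' k) (f p k))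

/-- (Individual) strategy-proofness. -/
def StratProof (f : (N → LinearOrder O) → N → O) : Prop :=
  ∀ (p p' : N → LinearOrder O) (i : N), (∀ j, j ≠ i → p' j = p j) →
    ¬ sPref (p i) (f p' i) (f p i)

/-- Nonbossiness. -/
def Nonbossy (f : (N → LinearOrder O) → N → O) : Prop :=
  ∀ (p p' : N → LinearOrder O) (i : N), (∀ j, j ≠ i → p' j = p j) →
    f p' i = f p i → f p' = f p

/-- Maskin monotonicity. -/
def MaskinMono (f : (N → LinearOrder O) → N → O) : Prop :=
  ∀ p p' : N → LinearOrder O,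
    (∀ (i : N) (b : O), (p i).lt b (f p i) → (p' i).lt b (f p i)) → f p' = f p

/-- Unanimity. -/
def Unanimity [Fintype O] [Nonempty O] (C : Set (N → O))
    (f : (N → LinearOrder O) → N → O) : Prop :=
  ∀ p, tau1 p ∈ C → f p = tau1 p

/-- The Fixed compromiser condition. -/
def FixedComp [Fintype O] [Nonempty O] (C : Set (N → O))
    (f : (N → LinearOrder O) → N → O) : Prop :=
  ∀ μ, μ ∉ C → ∃ i : N, ∀ p, tau1 p = μ → f p i ≠ μ i

/-- `pi'` is obtained from `pi` by moving `c` to the bottom of the ranking. -/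
def MoveBottom (pi pi' : LinearOrder O) (c : O) : Prop :=
  (∀ b, b ≠ c → pi'.lt c b) ∧ (∀ a b, a ≠ c → b ≠ c → (pi'.lt a b ↔ pi.lt a b))

/-- Compromiser invariance. -/
def CompInv [Fintype O] [Nonempty O] (C : Set (N → O))
    (f : (N → LinearOrder O) → N → O) : Prop :=
  ∀ μ, μ ∉ C → ∀ p p' : N → LinearOrder O, tau1 p = μ →
    (∀ i, (∀ q, tau1 q = μ → f q i ≠ μ i) → MoveBottom (p i) (p' i) (μ i)) →
    (∀ i, ¬ (∀ q, tau1 q = μ → f q i ≠ μ i) → p' i = p i) →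
    f p' = f p

/-- Pareto efficiency relative to the constraint `C`. -/
def ParetoEff (C : Set (N → O)) (f : (N → LinearOrder O) → N → O) : Prop :=
  ∀ p, ¬ ∃ ν ∈ C, (∀ i, wPref (p i) (ν i) (f p i)) ∧ ∃ k, sPref (p k) (ν k) (f p k)

/-- `diffSet x y = d(x,y)`, the set of agents on which `x` and `y` differ. -/
def diffSet (x y : N → O) : Set N := {i | x i ≠ y i}

/-- Forward consistency. -/
def ForwardCons (α : (N → O) → Set N) : Prop :=
  ∀ x y : N → O, diffSet x y ⊆ α x → α x \ diffSet x y ⊆ α y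

/-- The sequence of allocations `z 0, …, z m` is acyclic. -/
def AcyclicSeq (z : ℕ → N → O) (m : ℕ) : Prop :=
  ∀ (i : N) (r s t : ℕ), r < s → s < t → t ≤ m → z r i = z t i → z s i = z r i

/-- `x` and `y` are `i`-connected under `α`. -/
def IConn (α : (N → O) → Set N) (i : N) (x y : N → O) : Prop :=
  ∃ m : ℕ, 1 ≤ m ∧ ∃ z : ℕ → N → O,
    z 0 = x ∧ z m = y ∧ AcyclicSeq z m ∧ diffSet (z 0) (z 1) = {i} ∧
    ∀ l < m, diffSet (z l) (z (l + 1)) ⊆ α (z l)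

/-- Backward consistency. -/
def BackCons (C : Set (N → O)) (α : (N → O) → Set N) : Prop :=
  ∀ (i : N) (x y : N → O), x ∉ C → y ∉ C → IConn α i x y →
    ∀ x' : N → O, diffSet x x' ⊆ α y → i ∉ diffSet x x' → i ∈ α x'

/-- The pointwise union of all implementable local compromiser assignments inducing `f`. -/
def alphaUnionAll [Fintype O] [Nonempty O] (C : Set (N → O))
    (f : (N → LinearOrder O) → N → O) : (N → O) → Set N :=
  fun x => {i | ∃ β, lpInduces C β f ∧ i ∈ β x}

end

noncomputable section

variable {Mn Wn : Type}

/-- The marriage constraint: men are matched to women or themselves, women to men or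
themselves, and the matching is involutive. -/
def MarriageC (Mn Wn : Type) : Set ((Mn ⊕ Wn) → (Mn ⊕ Wn)) :=
  {μ | (∀ m : Mn, (∃ w : Wn, μ (Sum.inl m) = Sum.inr w) ∨ μ (Sum.inl m) = Sum.inl m) ∧
       (∀ w : Wn, (∃ m : Mn, μ (Sum.inr w) = Sum.inl m) ∨ μ (Sum.inr w) = Sum.inr w) ∧
       (∀ k, μ (μ k) = k)}

/-- With cumulative rejection set `R`, man `m` proposes to his favourite woman among
those he prefers to remaining single and who have not rejected him (`none` if there is
no such woman). -/
def damProp [Fintype Mn] [Fintype Wn]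
    (p : (Mn ⊕ Wn) → LinearOrder (Mn ⊕ Wn)) (R : Set (Mn × Wn)) (m : Mn) :
    Option (Mn ⊕ Wn) :=
  if h : (Finset.univ.filter fun o : Mn ⊕ Wn =>
      (∃ w : Wn, o = Sum.inr w ∧ (m, w) ∉ R) ∧
        (p (Sum.inl m)).lt (Sum.inl m) o).Nonempty
  then some (@Finset.max' _ (p (Sum.inl m)) _ h) else none

/-- The new rejections of the current round: `w` rejects a proposer `m` if she finds
him unacceptable or some acceptable proposer is better for her. -/
def damRej [Fintype Mn] [Fintype Wn]
    (p : (Mn ⊕ Wn) → LinearOrder (Mn ⊕ Wn)) (R : Set (Mn × Wn)) : Set (Mn × Wn) :=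
  {mw : Mn × Wn | damProp p R mw.1 = some (Sum.inr mw.2) ∧
    (¬ (p (Sum.inr mw.2)).lt (Sum.inr mw.2) (Sum.inl mw.1) ∨
      ∃ m' : Mn, damProp p R m' = some (Sum.inr mw.2) ∧
        (p (Sum.inr mw.2)).lt (Sum.inr mw.2) (Sum.inl m') ∧
        (p (Sum.inr mw.2)).lt (Sum.inl mw.1) (Sum.inl m'))}

/-- The man-proposing deferred acceptance algorithm at profile `p` terminates with the
matching `μ`: rejections accumulate until a round with no rejections, at which point
every proposing man is matched with the woman he proposes to and all other agents are
single. -/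
def DAMRuns [Fintype Mn] [Fintype Wn]
    (p : (Mn ⊕ Wn) → LinearOrder (Mn ⊕ Wn)) (μ : (Mn ⊕ Wn) → (Mn ⊕ Wn)) : Prop :=
  ∃ (k : ℕ) (R : ℕ → Set (Mn × Wn)),
    R 0 = ∅ ∧
    (∀ t < k, damRej p (R t) ≠ ∅ ∧ R (t + 1) = R t ∪ damRej p (R t)) ∧
    damRej p (R k) = ∅ ∧
    (∀ m : Mn, μ (Sum.inl m) = (damProp p (R k) m).getD (Sum.inl m)) ∧
    (∀ (w : Wn) (m : Mn), damProp p (R k) m = some (Sum.inr w) →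
      μ (Sum.inr w) = Sum.inl m) ∧
    (∀ w : Wn, (∀ m : Mn, damProp p (R k) m ≠ some (Sum.inr w)) →
      μ (Sum.inr w) = Sum.inr w)

end

section Aux
open Classical

lemma bestLC_lt {O : Type} [Fintype O] (pi : LinearOrder O) (a : O)
    (h : (LCfin pi a).Nonempty) : pi.lt (bestLC pi a) a := by
  have hmem : bestLC pi a ∈ LCfin pi a := by
    rw [bestLC, dif_pos h]; exact @Finset.max'_mem O pi _ h
  have := (Finset.mem_filter.mp hmem).2
  exact this

lemma induces_fixedComp {N O : Type} [Fintype O] [Nonempty O] {C : Set (N → O)}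
    {f : (N → LinearOrder O) → N → O} (h : ∃ α, lpInduces C α f) : FixedComp C f := by
  obtain ⟨α, hA, hrun⟩ := h
  intro μ hμ
  obtain ⟨i, hi⟩ := (hA μ).1 hμ
  refine ⟨i, fun p hp => ?_⟩
  obtain ⟨m, x, hx0, hstep, hxm, hC⟩ := hrun p
  have hx0' : x 0 = μ := hx0.trans hp
  have hm : 0 < m := by
    rcases Nat.eq_zero_or_pos m with h0 | h0
    · exfalso; apply hμ; rw [← hx0']; rw [h0] at hxm; rw [hxm]; exact hC
    · exact h0
  have key : ∀ t, 1 ≤ t → t ≤ m → (p i).lt (x t i) (μ i) := by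
    intro t
    induction t with
    | zero => intro h; exact absurd h (by omega)
    | succ t ih =>
      intro _ hle
      have ht : t < m := Nat.lt_of_succ_le hle
      obtain ⟨hnc, hnf, hs⟩ := hstep t ht
      by_cases hti : t = 0
      · subst hti
        have hiα : i ∈ α (x 0) := by rw [hx0']; exact hi
        have hne := hnf i hiα
        rw [hs]
        show (p i).lt (if i ∈ α (x 0) then bestLC (p i) (x 0 i) else x 0 i) (μ i)
        rw [if_pos hiα]
        have hb := bestLC_lt (p i) (x 0 i) hne
        rw [hx0'] at hb ⊢
        exact hb
      · have h1t : 1 ≤ t := Nat.one_le_iff_ne_zero.2 hti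
        have ihlt := ih h1t (le_of_lt ht)
        rw [hs]
        show (p i).lt (if i ∈ α (x t) then bestLC (p i) (x t i) else x t i) (μ i)
        by_cases hiα : i ∈ α (x t)
        · rw [if_pos hiα]
          have hlt2 : (p i).lt (bestLC (p i) (x t i)) (x t i) := bestLC_lt _ _ (hnf i hiα)
          exact @lt_trans O (p i).toPartialOrder.toPreorder _ _ _ hlt2 ihlt
        · rw [if_neg hiα]; exact ihlt
  have hfin := key m hm (le_refl m)
  rw [hxm] at hfin
  intro heq
  rw [heq] at hfin
  exact @lt_irrefl O (p i).toPartialOrder.toPreorder _ hfin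

end Aux
section AuxDA
open Classical
variable {Mn Wn : Type} [Fintype Mn] [Fintype Wn]

lemma max'_eq_of {α : Type} (pi : LinearOrder α) (s : Finset α) (h : s.Nonempty) (a : α)
    (ha : a ∈ s) (hmax : ∀ b ∈ s, pi.le b a) : @Finset.max' α pi s h = a :=
  @le_antisymm α pi.toPartialOrder _ _ (@Finset.max'_le α pi s h a hmax)
    (@Finset.le_max' α pi s a ha)

lemma damProp_mem {p : (Mn ⊕ Wn) → LinearOrder (Mn ⊕ Wn)} {R : Set (Mn × Wn)} {m : Mn}
    {o : Mn ⊕ Wn} (h : damProp p R m = some o) :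
    (∃ w, o = Sum.inr w ∧ (m, w) ∉ R) ∧ (p (Sum.inl m)).lt (Sum.inl m) o := by
  rw [damProp] at h
  split at h
  · rename_i hne
    have := @Finset.max'_mem _ (p (Sum.inl m)) _ hne
    rw [Option.some_inj] at h
    rw [h] at this
    exact (Finset.mem_filter.mp this).2
  · exact absurd h (by simp)

lemma damProp_eq_some (p : (Mn ⊕ Wn) → LinearOrder (Mn ⊕ Wn)) (R : Set (Mn × Wn)) (m : Mn)
    (a : Mn ⊕ Wn) (h1 : ∃ w, a = Sum.inr w ∧ (m, w) ∉ R)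
    (h2 : (p (Sum.inl m)).lt (Sum.inl m) a)
    (h3 : ∀ b, (∃ w, b = Sum.inr w ∧ (m, w) ∉ R) → (p (Sum.inl m)).lt (Sum.inl m) b →
      (p (Sum.inl m)).le b a) :
    damProp p R m = some a := by
  have ha : a ∈ (Finset.univ.filter fun o : Mn ⊕ Wn =>
      (∃ w : Wn, o = Sum.inr w ∧ (m, w) ∉ R) ∧ (p (Sum.inl m)).lt (Sum.inl m) o) :=
    Finset.mem_filter.mpr ⟨Finset.mem_univ _, h1, h2⟩
  have hne : (Finset.univ.filter fun o : Mn ⊕ Wn =>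
      (∃ w : Wn, o = Sum.inr w ∧ (m, w) ∉ R) ∧ (p (Sum.inl m)).lt (Sum.inl m) o).Nonempty :=
    ⟨a, ha⟩
  rw [damProp, dif_pos hne]
  exact congrArg some (max'_eq_of _ _ hne a ha (fun b hb => by
    obtain ⟨_, hb1, hb2⟩ := Finset.mem_filter.mp hb
    exact h3 b hb1 hb2))

lemma damProp_eq_none (p : (Mn ⊕ Wn) → LinearOrder (Mn ⊕ Wn)) (R : Set (Mn × Wn)) (m : Mn)
    (h : ∀ w : Wn, (m, w) ∉ R → ¬ (p (Sum.inl m)).lt (Sum.inl m) (Sum.inr w)) :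
    damProp p R m = none := by
  rw [damProp, dif_neg]
  rintro ⟨o, ho⟩
  obtain ⟨⟨w, rfl, hR⟩, hlt⟩ := (Finset.mem_filter.mp ho).2
  exact h w hR hlt

lemma rej_not_mem {p : (Mn ⊕ Wn) → LinearOrder (Mn ⊕ Wn)} {R : Set (Mn × Wn)}
    {mw : Mn × Wn} (h : mw ∈ damRej p R) : mw ∉ R := by
  obtain ⟨hprop, -⟩ := h
  obtain ⟨⟨w, hw, hR⟩, -⟩ := damProp_mem hprop
  cases Sum.inr.inj hw
  simpa using hR

lemma unique_proposer {p : (Mn ⊕ Wn) → LinearOrder (Mn ⊕ Wn)} {R : Set (Mn × Wn)}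
    (hk : damRej p R = ∅) {m m' : Mn} {w : Wn}
    (hm : damProp p R m = some (Sum.inr w)) (hm' : damProp p R m' = some (Sum.inr w)) :
    m = m' := by
  by_contra hne
  rcases @lt_trichotomy _ (p (Sum.inr w)) (Sum.inl m : Mn ⊕ Wn) (Sum.inl m') with h | h | h
  · by_cases hacc : (p (Sum.inr w)).lt (Sum.inr w) (Sum.inl m')
    · have hmem : (m, w) ∈ damRej p R := ⟨hm, Or.inr ⟨m', hm', hacc, h⟩⟩
      rw [hk] at hmem; exact hmem
    · have hmem : (m', w) ∈ damRej p R := ⟨hm', Or.inl hacc⟩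
      rw [hk] at hmem; exact hmem
  · exact hne (Sum.inl.inj h)
  · by_cases hacc : (p (Sum.inr w)).lt (Sum.inr w) (Sum.inl m)
    · have hmem : (m', w) ∈ damRej p R := ⟨hm', Or.inr ⟨m, hm, hacc, h⟩⟩
      rw [hk] at hmem; exact hmem
    · have hmem : (m, w) ∈ damRej p R := ⟨hm, Or.inl hacc⟩
      rw [hk] at hmem; exact hmem

lemma dam_exists (p : (Mn ⊕ Wn) → LinearOrder (Mn ⊕ Wn)) : ∃ μ, DAMRuns p μ := by
  classical
  let Rs : ℕ → Set (Mn × Wn) := fun t => Nat.rec ∅ (fun _ R => R ∪ damRej p R) t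
  have hR0 : Rs 0 = ∅ := rfl
  have hRsucc : ∀ t, Rs (t + 1) = Rs t ∪ damRej p (Rs t) := fun t => rfl
  have hmono : ∀ t, damRej p (Rs t) ≠ ∅ → Rs t ⊂ Rs (t + 1) := by
    intro t hne
    obtain ⟨mw, hmw⟩ := Set.nonempty_iff_ne_empty.mpr hne
    rw [hRsucc]
    exact (Set.ssubset_iff_of_subset Set.subset_union_left).mpr
      ⟨mw, Set.mem_union_right _ hmw, rej_not_mem hmw⟩
  have hstop : ∃ k, damRej p (Rs k) = ∅ := by
    by_contra hall
    push_neg at hall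
    have hcard : ∀ t, t ≤ (Rs t).ncard := by
      intro t; induction t with
      | zero => simp
      | succ t ih =>
        have hfin : (Rs (t + 1)).Finite := Set.Finite.subset Set.finite_univ (Set.subset_univ _)
        have := Set.ncard_lt_ncard (hmono t (Set.nonempty_iff_ne_empty.mp (hall t))) hfin
        omega
    have h1 := hcard (Nat.card (Mn × Wn) + 1)
    have h2 : (Rs (Nat.card (Mn × Wn) + 1)).ncard ≤ Nat.card (Mn × Wn) := by
      have := Set.ncard_le_ncard (Set.subset_univ (Rs (Nat.card (Mn × Wn) + 1)))
        Set.finite_univ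
      rwa [Set.ncard_univ] at this
    omega
  have hk : damRej p (Rs (Nat.find hstop)) = ∅ := Nat.find_spec hstop
  have hklt : ∀ t < Nat.find hstop, damRej p (Rs t) ≠ ∅ := fun t ht => Nat.find_min hstop ht
  refine ⟨fun o => Sum.elim (fun m => (damProp p (Rs (Nat.find hstop)) m).getD (Sum.inl m))
      (fun w => if h : ∃ m, damProp p (Rs (Nat.find hstop)) m = some (Sum.inr w)
        then Sum.inl h.choose else Sum.inr w) o,
    Nat.find hstop, Rs, hR0, fun t ht => ⟨hklt t ht, hRsucc t⟩, hk, fun m => rfl, ?_, ?_⟩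
  · intro w m hm
    have hex : ∃ m, damProp p (Rs (Nat.find hstop)) m = some (Sum.inr w) := ⟨m, hm⟩
    simp only [Sum.elim_inr]
    rw [dif_pos hex]
    exact congrArg Sum.inl (unique_proposer hk hex.choose_spec hm)
  · intro w hno
    simp only [Sum.elim_inr]
    rw [dif_neg]
    rintro ⟨m, hm⟩
    exact hno m hm

lemma dam_unique {p : (Mn ⊕ Wn) → LinearOrder (Mn ⊕ Wn)} {μ μ' : (Mn ⊕ Wn) → (Mn ⊕ Wn)}
    (h1 : DAMRuns p μ) (h2 : DAMRuns p μ') : μ = μ' := by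
  obtain ⟨k, R, hR0, hrec, hk, hmen, hwa, hwb⟩ := h1
  obtain ⟨k', R', hR0', hrec', hk', hmen', hwa', hwb'⟩ := h2
  have hagree : ∀ t, t ≤ k → t ≤ k' → R t = R' t := by
    intro t
    induction t with
    | zero => intro _ _; rw [hR0, hR0']
    | succ t ih =>
      intro ha hb
      rw [(hrec t (by omega)).2, (hrec' t (by omega)).2, ih (by omega) (by omega)]
  have hkk : k = k' := by
    by_contra hne
    rcases Nat.lt_or_ge k k' with h | h
    · exact (hrec' k h).1 (by rw [← hagree k le_rfl (le_of_lt h)]; exact hk)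
    · have h' : k' < k := by omega
      exact (hrec k' h').1 (by rw [hagree k' (le_of_lt h') le_rfl]; exact hk')
  subst hkk
  have hRR : R k = R' k := hagree k le_rfl le_rfl
  funext o
  cases o with
  | inl m => rw [hmen m, hmen' m, hRR]
  | inr w =>
    by_cases hex : ∃ m, damProp p (R k) m = some (Sum.inr w)
    · obtain ⟨m, hm⟩ := hex
      rw [hwa w m hm, hwa' w m (by rw [← hRR]; exact hm)]
    · push_neg at hex
      rw [hwb w hex, hwb' w (fun m => by rw [← hRR]; exact hex m)]

end AuxDA
section AuxConc
open Classical

lemma damProp_eq_some' {Mn Wn : Type} [Fintype Mn] [Fintype Wn]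
    (p : (Mn ⊕ Wn) → LinearOrder (Mn ⊕ Wn)) (R : Set (Mn × Wn)) (m : Mn)
    (w0 : Wn) (h1 : (m, w0) ∉ R) (h2 : (p (Sum.inl m)).lt (Sum.inl m) (Sum.inr w0))
    (h3 : ∀ w : Wn, (m, w) ∉ R → (p (Sum.inl m)).lt (Sum.inl m) (Sum.inr w) →
      (p (Sum.inl m)).le (Sum.inr w) (Sum.inr w0)) :
    damProp p R m = some (Sum.inr w0) := by
  apply damProp_eq_some p R m _ ⟨w0, rfl, h1⟩ h2
  rintro b ⟨w, rfl, hR⟩ hlt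
  exact h3 w hR hlt

lemma damRej_eq_general {Mn Wn : Type} [Fintype Mn] [Fintype Wn]
    (p : (Mn ⊕ Wn) → LinearOrder (Mn ⊕ Wn)) (R : Set (Mn × Wn))
    (prop : Mn → Option (Mn ⊕ Wn)) (hprop : ∀ m, damProp p R m = prop m) :
    damRej p R = {mw : Mn × Wn | prop mw.1 = some (Sum.inr mw.2) ∧
      (¬ (p (Sum.inr mw.2)).lt (Sum.inr mw.2) (Sum.inl mw.1) ∨
        ∃ m' : Mn, prop m' = some (Sum.inr mw.2) ∧
          (p (Sum.inr mw.2)).lt (Sum.inr mw.2) (Sum.inl m') ∧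
          (p (Sum.inr mw.2)).lt (Sum.inl mw.1) (Sum.inl m'))} := by
  unfold damRej
  simp only [hprop]

lemma topObj_eq {O : Type} [Fintype O] [Nonempty O] (pi : LinearOrder O) (a : O)
    (h : ∀ b, pi.le b a) : topObj pi = a :=
  max'_eq_of pi Finset.univ _ a (Finset.mem_univ a) (fun b _ => h b)

/-- rank tables for profile A -/
def rA : (Fin 3 ⊕ Fin 3) → (Fin 3 ⊕ Fin 3) → ℕ :=
  Sum.elim
    ![Sum.elim ![4, 0, 1] ![5, 2, 3],
      Sum.elim ![0, 4, 1] ![2, 5, 3],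
      Sum.elim ![0, 1, 5] ![2, 3, 4]]
    ![Sum.elim ![4, 5, 0] ![3, 1, 2],
      Sum.elim ![5, 4, 0] ![1, 3, 2],
      Sum.elim ![0, 1, 2] ![3, 4, 5]]

/-- rank tables for profile B -/
def rB : (Fin 3 ⊕ Fin 3) → (Fin 3 ⊕ Fin 3) → ℕ :=
  Sum.elim
    ![Sum.elim ![3, 0, 1] ![5, 4, 2],
      Sum.elim ![0, 3, 1] ![4, 5, 2],
      Sum.elim ![0, 1, 5] ![2, 3, 4]]
    ![Sum.elim ![0, 5, 1] ![4, 2, 3],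
      Sum.elim ![5, 4, 0] ![1, 3, 2],
      Sum.elim ![0, 1, 2] ![3, 4, 5]]

lemma rA_inj (o : Fin 3 ⊕ Fin 3) : Function.Injective (rA o) := by
  have h : ∀ o a b : Fin 3 ⊕ Fin 3, rA o a = rA o b → a = b := by decide
  exact fun {a b} hab => h o a b hab

lemma rB_inj (o : Fin 3 ⊕ Fin 3) : Function.Injective (rB o) := by
  have h : ∀ o a b : Fin 3 ⊕ Fin 3, rB o a = rB o b → a = b := by decide
  exact fun {a b} hab => h o a b hab

noncomputable def pA : (Fin 3 ⊕ Fin 3) → LinearOrder (Fin 3 ⊕ Fin 3) :=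
  fun o => LinearOrder.lift' (rA o) (rA_inj o)

noncomputable def pB : (Fin 3 ⊕ Fin 3) → LinearOrder (Fin 3 ⊕ Fin 3) :=
  fun o => LinearOrder.lift' (rB o) (rB_inj o)

lemma pA_lt (o a b : Fin 3 ⊕ Fin 3) : (pA o).lt a b ↔ rA o a < rA o b := Iff.rfl
lemma pA_le (o a b : Fin 3 ⊕ Fin 3) : (pA o).le a b ↔ rA o a ≤ rA o b := Iff.rfl
lemma pB_lt (o a b : Fin 3 ⊕ Fin 3) : (pB o).lt a b ↔ rB o a < rB o b := Iff.rfl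
lemma pB_le (o a b : Fin 3 ⊕ Fin 3) : (pB o).le a b ↔ rB o a ≤ rB o b := Iff.rfl

/-- the infeasible top-allocation -/
def mu0 : (Fin 3 ⊕ Fin 3) → (Fin 3 ⊕ Fin 3) :=
  Sum.elim ![Sum.inr 0, Sum.inr 1, Sum.inl 2] ![Sum.inl 1, Sum.inl 0, Sum.inr 2]

/-- DA outcome at profile A -/
def muA : (Fin 3 ⊕ Fin 3) → (Fin 3 ⊕ Fin 3) :=
  Sum.elim ![Sum.inr 0, Sum.inr 1, Sum.inl 2] ![Sum.inl 0, Sum.inl 1, Sum.inr 2]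

/-- DA outcome at profile B -/
def muB : (Fin 3 ⊕ Fin 3) → (Fin 3 ⊕ Fin 3) :=
  Sum.elim ![Sum.inr 1, Sum.inr 0, Sum.inl 2] ![Sum.inl 1, Sum.inl 0, Sum.inr 2]

lemma tau1A : tau1 pA = mu0 := by
  have h : ∀ o b : Fin 3 ⊕ Fin 3, rA o b ≤ rA o (mu0 o) := by decide
  funext o
  exact topObj_eq (pA o) (mu0 o) (fun b => (pA_le o b (mu0 o)).mpr (h o b))

lemma tau1B : tau1 pB = mu0 := by
  have h : ∀ o b : Fin 3 ⊕ Fin 3, rB o b ≤ rB o (mu0 o) := by decide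
  funext o
  exact topObj_eq (pB o) (mu0 o) (fun b => (pB_le o b (mu0 o)).mpr (h o b))

lemma mu0_infeasible : mu0 ∉ MarriageC (Fin 3) (Fin 3) := by
  rintro ⟨-, -, h3⟩
  exact absurd (h3 (Sum.inl 0)) (by decide)
section AuxRuns
open Classical

-- rejection sets for profile B
def RB1 : Set (Fin 3 × Fin 3) := {(0, 0)}
def RB2 : Set (Fin 3 × Fin 3) := insert (0, 0) {(1, 1)}

-- damProp facts, profile A, round 0
lemma dpA0 : damProp pA (∅ : Set (Fin 3 × Fin 3)) 0 = some (Sum.inr 0) := by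
  apply damProp_eq_some' _ _ _ _ (by simp) (by rw [pA_lt]; decide)
  intro w _ hlt
  rw [pA_le]; rw [pA_lt] at hlt
  revert hlt; fin_cases w <;> decide

lemma dpA1 : damProp pA (∅ : Set (Fin 3 × Fin 3)) 1 = some (Sum.inr 1) := by
  apply damProp_eq_some' _ _ _ _ (by simp) (by rw [pA_lt]; decide)
  intro w _ hlt
  rw [pA_le]; rw [pA_lt] at hlt
  revert hlt; fin_cases w <;> decide

lemma dpA2 : damProp pA (∅ : Set (Fin 3 × Fin 3)) 2 = none := by
  apply damProp_eq_none
  intro w _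
  rw [pA_lt]; fin_cases w <;> decide

-- damProp facts, profile B
lemma dpB00 : damProp pB (∅ : Set (Fin 3 × Fin 3)) 0 = some (Sum.inr 0) := by
  apply damProp_eq_some' _ _ _ _ (by simp) (by rw [pB_lt]; decide)
  intro w _ hlt
  rw [pB_le]; rw [pB_lt] at hlt
  revert hlt; fin_cases w <;> decide

lemma dpB01 : damProp pB (∅ : Set (Fin 3 × Fin 3)) 1 = some (Sum.inr 1) := by
  apply damProp_eq_some' _ _ _ _ (by simp) (by rw [pB_lt]; decide)
  intro w _ hlt
  rw [pB_le]; rw [pB_lt] at hlt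
  revert hlt; fin_cases w <;> decide

lemma dpB02 : damProp pB (∅ : Set (Fin 3 × Fin 3)) 2 = none := by
  apply damProp_eq_none
  intro w _
  rw [pB_lt]; fin_cases w <;> decide

lemma dpB10 : damProp pB RB1 0 = some (Sum.inr 1) := by
  apply damProp_eq_some' _ _ _ _
    (by rw [RB1, Set.mem_singleton_iff]; decide) (by rw [pB_lt]; decide)
  intro w hR hlt
  rw [pB_le]; rw [pB_lt] at hlt; rw [RB1, Set.mem_singleton_iff] at hR
  revert hR hlt; fin_cases w <;> decide

lemma dpB11 : damProp pB RB1 1 = some (Sum.inr 1) := by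
  apply damProp_eq_some' _ _ _ _
    (by rw [RB1, Set.mem_singleton_iff]; decide) (by rw [pB_lt]; decide)
  intro w hR hlt
  rw [pB_le]; rw [pB_lt] at hlt; rw [RB1, Set.mem_singleton_iff] at hR
  revert hR hlt; fin_cases w <;> decide

lemma dpB12 : damProp pB RB1 2 = none := by
  apply damProp_eq_none
  intro w _
  rw [pB_lt]; fin_cases w <;> decide

lemma memRB2 (mw : Fin 3 × Fin 3) : mw ∈ RB2 ↔ (mw = (0, 0) ∨ mw = (1, 1)) := by
  rw [RB2, Set.mem_insert_iff, Set.mem_singleton_iff]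

lemma dpB20 : damProp pB RB2 0 = some (Sum.inr 1) := by
  apply damProp_eq_some' _ _ _ _ (by rw [memRB2]; decide) (by rw [pB_lt]; decide)
  intro w hR hlt
  rw [pB_le]; rw [pB_lt] at hlt; rw [memRB2] at hR
  revert hR hlt; fin_cases w <;> decide

lemma dpB21 : damProp pB RB2 1 = some (Sum.inr 0) := by
  apply damProp_eq_some' _ _ _ _ (by rw [memRB2]; decide) (by rw [pB_lt]; decide)
  intro w hR hlt
  rw [pB_le]; rw [pB_lt] at hlt; rw [memRB2] at hR
  revert hR hlt; fin_cases w <;> decide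

lemma dpB22 : damProp pB RB2 2 = none := by
  apply damProp_eq_none
  intro w _
  rw [pB_lt]; fin_cases w <;> decide

-- damRej computations
lemma rejA0 : damRej pA (∅ : Set (Fin 3 × Fin 3)) = ∅ := by
  rw [damRej_eq_general pA ∅ ![some (Sum.inr 0), some (Sum.inr 1), none]
    (by intro m; fin_cases m; exacts [dpA0, dpA1, dpA2])]
  ext mw
  simp only [Set.mem_setOf_eq, Set.mem_empty_iff_false, iff_false, pA_lt]
  revert mw; decide

lemma rejB0 : damRej pB (∅ : Set (Fin 3 × Fin 3)) = RB1 := by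
  rw [damRej_eq_general pB ∅ ![some (Sum.inr 0), some (Sum.inr 1), none]
    (by intro m; fin_cases m; exacts [dpB00, dpB01, dpB02])]
  ext mw
  simp only [Set.mem_setOf_eq, RB1, Set.mem_singleton_iff, pB_lt]
  revert mw; decide

lemma rejB1 : damRej pB RB1 = {((1 : Fin 3), (1 : Fin 3))} := by
  rw [damRej_eq_general pB RB1 ![some (Sum.inr 1), some (Sum.inr 1), none]
    (by intro m; fin_cases m; exacts [dpB10, dpB11, dpB12])]
  ext mw
  simp only [Set.mem_setOf_eq, Set.mem_singleton_iff, pB_lt]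
  revert mw; decide

lemma rejB2 : damRej pB RB2 = ∅ := by
  rw [damRej_eq_general pB RB2 ![some (Sum.inr 1), some (Sum.inr 0), none]
    (by intro m; fin_cases m; exacts [dpB20, dpB21, dpB22])]
  ext mw
  simp only [Set.mem_setOf_eq, Set.mem_empty_iff_false, iff_false, pB_lt]
  revert mw; decide

lemma damRunsA : DAMRuns pA muA := by
  refine ⟨0, fun _ => ∅, rfl, by omega, rejA0, ?_, ?_, ?_⟩
  · intro m
    fin_cases m
    · show muA (Sum.inl 0) = (damProp pA ∅ 0).getD (Sum.inl 0)
      rw [dpA0]; rfl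
    · show muA (Sum.inl 1) = (damProp pA ∅ 1).getD (Sum.inl 1)
      rw [dpA1]; rfl
    · show muA (Sum.inl 2) = (damProp pA ∅ 2).getD (Sum.inl 2)
      rw [dpA2]; rfl
  · intro w m h
    fin_cases m
    · have h' : damProp pA ∅ 0 = some (Sum.inr w) := h
      rw [dpA0] at h'
      have hw : (0 : Fin 3) = w := by simpa using h'
      show muA (Sum.inr w) = Sum.inl 0
      rw [← hw]; rfl
    · have h' : damProp pA ∅ 1 = some (Sum.inr w) := h
      rw [dpA1] at h'
      have hw : (1 : Fin 3) = w := by simpa using h'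
      show muA (Sum.inr w) = Sum.inl 1
      rw [← hw]; rfl
    · have h' : damProp pA ∅ 2 = some (Sum.inr w) := h
      rw [dpA2] at h'; exact absurd h' (by simp)
  · intro w hw
    fin_cases w
    · exact absurd dpA0 (hw 0)
    · exact absurd dpA1 (hw 1)
    · rfl

def RBseq : ℕ → Set (Fin 3 × Fin 3) :=
  fun t => if t = 0 then ∅ else if t = 1 then RB1 else RB2

lemma damRunsB : DAMRuns pB muB := by
  refine ⟨2, RBseq, rfl, ?_, rejB2, ?_, ?_, ?_⟩
  · intro t ht
    interval_cases t
    · constructor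
      · rw [show RBseq 0 = ∅ from rfl, rejB0]
        exact fun h => absurd h (by rw [RB1]; simp)
      · show RBseq 1 = RBseq 0 ∪ damRej pB (RBseq 0)
        rw [show RBseq 0 = ∅ from rfl, show RBseq 1 = RB1 from rfl, rejB0]
        simp
    · constructor
      · rw [show RBseq 1 = RB1 from rfl, rejB1]
        exact fun h => absurd h (by simp)
      · show RBseq 2 = RBseq 1 ∪ damRej pB (RBseq 1)
        rw [show RBseq 1 = RB1 from rfl, show RBseq 2 = RB2 from rfl, rejB1]
        rw [RB1, RB2, Set.singleton_union]
  · intro m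
    fin_cases m
    · show muB (Sum.inl 0) = (damProp pB RB2 0).getD (Sum.inl 0)
      rw [dpB20]; rfl
    · show muB (Sum.inl 1) = (damProp pB RB2 1).getD (Sum.inl 1)
      rw [dpB21]; rfl
    · show muB (Sum.inl 2) = (damProp pB RB2 2).getD (Sum.inl 2)
      rw [dpB22]; rfl
  · intro w m h
    fin_cases m
    · have h' : damProp pB RB2 0 = some (Sum.inr w) := h
      rw [dpB20] at h'
      have hw : (1 : Fin 3) = w := by simpa using h'
      show muB (Sum.inr w) = Sum.inl 0
      rw [← hw]; rfl
    · have h' : damProp pB RB2 1 = some (Sum.inr w) := h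
      rw [dpB21] at h'
      have hw : (0 : Fin 3) = w := by simpa using h'
      show muB (Sum.inr w) = Sum.inl 1
      rw [← hw]; rfl
    · have h' : damProp pB RB2 2 = some (Sum.inr w) := h
      rw [dpB22] at h'; exact absurd h' (by simp)
  · intro w hw
    rw [show RBseq 2 = RB2 from rfl] at hw
    fin_cases w
    · exact absurd dpB21 (hw 1)
    · exact absurd dpB20 (hw 0)
    · rfl

end AuxRuns
lemma fixedcomp_violated :
    ¬ FixedComp (MarriageC (Fin 3) (Fin 3)) (fun p => (dam_exists p).choose) := by
  intro h
  obtain ⟨i, hi⟩ := h mu0 mu0_infeasible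
  have hfA : (dam_exists pA).choose = muA := dam_unique (dam_exists pA).choose_spec damRunsA
  have hfB : (dam_exists pB).choose = muB := dam_unique (dam_exists pB).choose_spec damRunsB
  have hA : ∀ m : Fin 3, muA (Sum.inl m) = mu0 (Sum.inl m) := by decide
  have hB : ∀ w : Fin 3, muB (Sum.inr w) = mu0 (Sum.inr w) := by decide
  rcases i with m | w
  · exact hi pA tau1A (by show (dam_exists pA).choose _ = _; rw [hfA]; exact hA m)
  · exact hi pB tau1B (by show (dam_exists pB).choose _ = _; rw [hfB]; exact hB w)
/-- in the marriage problem with three men and three women, the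
man-proposing deferred acceptance mechanism violates the Fixed compromiser condition,
and consequently is not a local priority mechanism. -/
theorem marriageDA_not_localPriority :
    ∃ f : ((Fin 3 ⊕ Fin 3) → LinearOrder (Fin 3 ⊕ Fin 3)) →
          (Fin 3 ⊕ Fin 3) → (Fin 3 ⊕ Fin 3),
      (∀ p, DAMRuns p (f p)) ∧
      ¬ FixedComp (MarriageC (Fin 3) (Fin 3)) f ∧
      ¬ ∃ α, lpInduces (MarriageC (Fin 3) (Fin 3)) α f := by

  refine ⟨fun p => (dam_exists p).choose, fun p => (dam_exists p).choose_spec,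
    fixedcomp_violated, fun h => fixedcomp_violated (induces_fixedComp h)⟩
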